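/- Suppose u : ℝⁿ → ℝ is semiconcave with constant C and v : ℝⁿ → ℝ is semiconvex with constant C, u ≥ v, and u(x₀) = v(x₀). Then for all x₁, x₂ ∈ A = {u = v} and all θ ∈ ℝⁿ, ⟨Du(x₁) − Du(x₂), θ⟩ ≤ C|x₂−x₁|² + C|x₂−x₁||θ| + 2C|θ|². -/

import Mathlib

open RealInnerProductSpace

lemma norm_comb {E : Type*} [NormedAddCommGroup E] [InnerProductSpace ℝ E]
    (a b : ℝ) (hab : a + b = 1) (x y : E) :
    ‖a • x + b • y‖ ^ 2 = a * ‖x‖ ^ 2 + b * ‖y‖ ^ 2 - a * b * ‖x - y‖ ^ 2 := by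
  have h1 : ‖a • x + b • y‖ ^ 2 = ⟪a • x + b • y, a • x + b • y⟫ :=
    (real_inner_self_eq_norm_sq _).symm
  have h2 : ‖x‖ ^ 2 = ⟪x, x⟫ := (real_inner_self_eq_norm_sq _).symm
  have h3 : ‖y‖ ^ 2 = ⟪y, y⟫ := (real_inner_self_eq_norm_sq _).symm
  have h4 : ‖x - y‖ ^ 2 = ⟪x - y, x - y⟫ := (real_inner_self_eq_norm_sq _).symm
  rw [h1, h2, h3, h4]
  simp only [inner_add_left, inner_add_right, inner_sub_left, inner_sub_right,
    real_inner_smul_left, real_inner_smul_right, real_inner_comm x y]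
  linear_combination (a * ⟪x, x⟫ + b * ⟪y, y⟫) * hab

/-- `u` is semiconcave with linear modulus and constant `C` on `ℝⁿ`. -/
def Semiconcave {n : ℕ} (C : ℝ) (u : EuclideanSpace ℝ (Fin n) → ℝ) : Prop :=
  ∀ x y : EuclideanSpace ℝ (Fin n), ∀ lam ∈ Set.Icc (0:ℝ) 1,
    lam * u x + (1 - lam) * u y - u (lam • x + (1 - lam) • y) ≤
      C / 2 * lam * (1 - lam) * ‖x - y‖ ^ 2

lemma semiconcave_convexOn {n : ℕ} {C : ℝ} {u : EuclideanSpace ℝ (Fin n) → ℝ}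
    (hu : Semiconcave C u) :
    ConvexOn ℝ Set.univ (fun y => C / 2 * ‖y‖ ^ 2 - u y) := by
  refine ⟨convex_univ, fun x _ y _ a b ha hb hab => ?_⟩
  have h := hu x y a ⟨ha, by linarith⟩
  have hb' : b = 1 - a := by linarith
  subst hb'
  have hn := norm_comb a (1 - a) (by ring) x y
  simp only [smul_eq_mul]
  rw [hn]
  nlinarith [h]

lemma exists_subgradient {E : Type*} [NormedAddCommGroup E] [InnerProductSpace ℝ E]
    [FiniteDimensional ℝ E] (f : E → ℝ)
    (hf : ConvexOn ℝ Set.univ f) (x : E) :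
    ∃ p : E, ∀ y, f x + ⟪p, y - x⟫ ≤ f y := by
  have hcont : Continuous f := by
    rw [← continuousOn_univ]
    exact hf.continuousOn isOpen_univ
  set S : Set (E × ℝ) := {q | f q.1 < q.2} with hS
  have hSconv : Convex ℝ S := by
    intro q hq r hr a b ha hb hab
    simp only [hS, Set.mem_setOf_eq] at *
    have hcv := hf.2 (Set.mem_univ q.1) (Set.mem_univ r.1) ha hb hab
    simp only [smul_eq_mul] at hcv
    have hmid : f (a • q + b • r).1 ≤ a * f q.1 + b * f r.1 := hcv
    have hlt : a * f q.1 + b * f r.1 < a * q.2 + b * r.2 := by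
      rcases eq_or_lt_of_le ha with ha' | ha'
      · have hb1 : b = 1 := by linarith
        rw [← ha', hb1]; simpa using hr
      · have h1 : a * f q.1 < a * q.2 := by nlinarith
        have h2 : b * f r.1 ≤ b * r.2 := by nlinarith
        linarith
    exact lt_of_le_of_lt hmid hlt
  have hSopen : IsOpen S := isOpen_lt (hcont.comp continuous_fst) continuous_snd
  have hxS : (x, f x) ∉ S := by simp [hS]
  obtain ⟨L, hL⟩ := geometric_hahn_banach_point_open hSconv hSopen hxS
  set c : ℝ := L (0, 1) with hc
  have hsplit : ∀ (y : E) (t : ℝ), L (y, t) = L (y, 0) + t * c := by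
    intro y t
    have heq : (y, t) = (y, (0:ℝ)) + t • ((0:E), (1:ℝ)) := by simp [Prod.ext_iff]
    rw [heq, map_add, map_smul]; simp [smul_eq_mul, hc]
  have hkey : ∀ (y : E) (t : ℝ), f y < t → L (x, f x) < L (y, 0) + t * c := by
    intro y t ht
    have := hL (y, t) ht
    rwa [hsplit y t] at this
  have h2 : L (x, f x) = L (x, 0) + f x * c := hsplit x (f x)
  have hcpos : 0 < c := by
    have h1 := hkey x (f x + 1) (by linarith)
    nlinarith
  have hmain : ∀ y : E, L (x, f x) ≤ L (y, 0) + f y * c := by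
    intro y
    by_contra hcon
    push_neg at hcon
    set ε := (L (x, f x) - (L (y, 0) + f y * c)) / c with hε
    have hεpos : 0 < ε := div_pos (by linarith) hcpos
    have hk := hkey y (f y + ε) (by linarith)
    rw [hε] at hk
    field_simp at hk
    nlinarith [hk, hcpos]
  refine ⟨(InnerProductSpace.toDual ℝ E).symm
    ((-c⁻¹) • (L.comp (ContinuousLinearMap.inl ℝ E ℝ))), fun y => ?_⟩
  rw [InnerProductSpace.toDual_symm_apply]
  have hm := hmain y
  have hsub : L.comp (ContinuousLinearMap.inl ℝ E ℝ) (y - x) = L (y, 0) - L (x, 0) := by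
    have : ((y - x : E), (0:ℝ)) = (y, (0:ℝ)) - (x, (0:ℝ)) := by simp [Prod.ext_iff]
    simp only [ContinuousLinearMap.comp_apply, ContinuousLinearMap.inl_apply, this, map_sub]
  simp only [ContinuousLinearMap.smul_apply, smul_eq_mul, hsub]
  have hgoal : (f x + -c⁻¹ * (L (y, 0) - L (x, 0))) * c ≤ f y * c := by
    have hexp : (f x + -c⁻¹ * (L (y, 0) - L (x, 0))) * c
        = f x * c - (L (y, 0) - L (x, 0)) := by
      field_simp; ring
    rw [hexp]; linarith
  exact le_of_mul_le_mul_right hgoal hcpos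

lemma norm_sq_expand {E : Type*} [NormedAddCommGroup E] [InnerProductSpace ℝ E] (x y : E) :
    ‖y‖ ^ 2 = ‖x‖ ^ 2 + 2 * ⟪x, y - x⟫ + ‖y - x‖ ^ 2 := by
  have h2 : ‖x‖ ^ 2 = ⟪x, x⟫ := (real_inner_self_eq_norm_sq _).symm
  have h3 : ‖y‖ ^ 2 = ⟪y, y⟫ := (real_inner_self_eq_norm_sq _).symm
  have h4 : ‖y - x‖ ^ 2 = ⟪y - x, y - x⟫ := (real_inner_self_eq_norm_sq _).symm
  rw [h2, h3, h4]
  simp only [inner_sub_left, inner_sub_right, real_inner_comm x y]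
  ring

lemma contact_lemma {n : ℕ} {C : ℝ} {u v : EuclideanSpace ℝ (Fin n) → ℝ}
    (hu : Semiconcave C u) (hv : Semiconcave C (fun x => -v x))
    (huv : ∀ x, v x ≤ u x) (x : EuclideanSpace ℝ (Fin n)) (hx : u x = v x) :
    ∃ p : EuclideanSpace ℝ (Fin n), gradient u x = p ∧
      (∀ y, u y ≤ u x + ⟪p, y - x⟫ + C / 2 * ‖y - x‖ ^ 2) ∧
      (∀ y, v x + ⟪p, y - x⟫ - C / 2 * ‖y - x‖ ^ 2 ≤ v y) := by
  obtain ⟨q, hq⟩ := exists_subgradient _ (semiconcave_convexOn hu) x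
  obtain ⟨q', hq'⟩ := exists_subgradient _ (semiconcave_convexOn hv) x
  simp only [sub_neg_eq_add] at hq'
  have hpu : ∀ y, u y ≤ u x + ⟪C • x - q, y - x⟫ + C / 2 * ‖y - x‖ ^ 2 := by
    intro y
    have h := hq y
    rw [norm_sq_expand x y] at h
    rw [inner_sub_left, real_inner_smul_left]
    linarith
  have hpv : ∀ y, v x + ⟪q' - C • x, y - x⟫ - C / 2 * ‖y - x‖ ^ 2 ≤ v y := by
    intro y
    have h := hq' y
    rw [norm_sq_expand x y] at h
    rw [inner_sub_left, real_inner_smul_left]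
    linarith
  have hd : q' - C • x = C • x - q := by
    by_contra hne
    set d := (q' - C • x) - (C • x - q) with hdd
    have hd0 : d ≠ 0 := sub_ne_zero.mpr hne
    have hdpos : (0:ℝ) < ‖d‖ ^ 2 := pow_pos (norm_pos_iff.mpr hd0) 2
    set t : ℝ := 1 / (2 * (|C| + 1)) with ht
    have htpos : 0 < t := by positivity
    have hdz : ⟪d, t • d⟫ = ⟪q' - C • x, (x + t • d) - x⟫ - ⟪C • x - q, (x + t • d) - x⟫ := by
      rw [add_sub_cancel_left, hdd, inner_sub_left]
    have hineq : ⟪d, t • d⟫ ≤ C * ‖(x + t • d) - x‖ ^ 2 := by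
      have h1 := hpu (x + t • d)
      have h2 := hpv (x + t • d)
      have h3 := huv (x + t • d)
      rw [hdz]
      linarith
    rw [real_inner_smul_right, real_inner_self_eq_norm_sq] at hineq
    rw [add_sub_cancel_left, norm_smul, Real.norm_eq_abs, abs_of_pos htpos, mul_pow] at hineq
    have hCt : C * t ≤ |C| * t := mul_le_mul_of_nonneg_right (le_abs_self C) htpos.le
    have hCt2 : |C| * t < 1 := by
      rw [ht, mul_one_div, div_lt_one (by positivity)]
      nlinarith [abs_nonneg C]
    nlinarith [hineq, mul_lt_mul_of_pos_right hCt2 (mul_pos htpos hdpos),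
      mul_le_mul_of_nonneg_right hCt (mul_pos htpos hdpos).le]
  set p := C • x - q with hp
  rw [hd] at hpv
  have hsand : ∀ h : EuclideanSpace ℝ (Fin n),
      |u (x + h) - u x - ⟪p, h⟫| ≤ |C| / 2 * ‖h‖ ^ 2 := by
    intro h
    have h1 := hpu (x + h)
    have h2 := hpv (x + h)
    have h3 := huv (x + h)
    rw [add_sub_cancel_left] at h1 h2
    have hC : C / 2 * ‖h‖ ^ 2 ≤ |C| / 2 * ‖h‖ ^ 2 := by
      nlinarith [le_abs_self C, sq_nonneg ‖h‖]
    rw [abs_le]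
    constructor <;> linarith
  have hgrad : HasGradientAt u p x := by
    rw [hasGradientAt_iff_hasFDerivAt, hasFDerivAt_iff_isLittleO_nhds_zero]
    rw [Asymptotics.isLittleO_iff]
    intro ε hε
    filter_upwards [Metric.ball_mem_nhds (0 : EuclideanSpace ℝ (Fin n))
      (show (0:ℝ) < ε / (|C| / 2 + 1) by positivity)] with h hh
    rw [mem_ball_zero_iff] at hh
    have h1 := hsand h
    rw [InnerProductSpace.toDual_apply_apply, Real.norm_eq_abs]
    have hb : |C| / 2 * ‖h‖ ^ 2 ≤ ε * ‖h‖ := by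
      have h2 : |C| / 2 * ‖h‖ ≤ ε := by
        have hh' : ‖h‖ * (|C| / 2 + 1) < ε := (lt_div_iff₀ (by positivity)).mp hh
        nlinarith [norm_nonneg h]
      nlinarith [norm_nonneg h]
    calc |u (x + h) - u x - ⟪p, h⟫| ≤ |C| / 2 * ‖h‖ ^ 2 := h1
      _ ≤ ε * ‖h‖ := hb
  exact ⟨p, hgrad.gradient, hpu, hpv⟩

lemma C_nonneg {n : ℕ} {C : ℝ} {u v : EuclideanSpace ℝ (Fin n) → ℝ}
    (hu : Semiconcave C u) (hv : Semiconcave C (fun x => -v x))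
    (huv : ∀ x, v x ≤ u x) (x₀ : EuclideanSpace ℝ (Fin n)) (hx₀ : u x₀ = v x₀)
    (hn : 0 < n) : 0 ≤ C := by
  set e : EuclideanSpace ℝ (Fin n) := EuclideanSpace.single ⟨0, hn⟩ 1 with he
  have hmid : (1/2 : ℝ) • (x₀ + e) + (1 - 1/2 : ℝ) • (x₀ - e) = x₀ := by
    norm_num
    module
  have hdiff : (x₀ + e) - (x₀ - e) = (2:ℝ) • e := by module
  have hnorm : ‖(x₀ + e) - (x₀ - e)‖ ^ 2 = 4 := by
    rw [hdiff, norm_smul]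
    have : ‖e‖ = 1 := by rw [he, EuclideanSpace.norm_single]; norm_num
    rw [this]
    norm_num
  have h1 := hu (x₀ + e) (x₀ - e) (1/2) ⟨by norm_num, by norm_num⟩
  have h2 := hv (x₀ + e) (x₀ - e) (1/2) ⟨by norm_num, by norm_num⟩
  rw [hmid, hnorm] at h1 h2
  simp only at h2
  have h3 := huv (x₀ + e)
  have h4 := huv (x₀ - e)
  nlinarith [h1, h2, h3, h4, hx₀]

theorem stmt17 {n : ℕ} (C : ℝ) (u v : EuclideanSpace ℝ (Fin n) → ℝ)
    (hu : Semiconcave C u) (hv : Semiconcave C (fun x => -v x))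
    (huv : ∀ x, v x ≤ u x) (x₀ : EuclideanSpace ℝ (Fin n)) (hx₀ : u x₀ = v x₀)
    (A : Set (EuclideanSpace ℝ (Fin n))) (hA : A = {x | u x = v x}) :
    ∀ x₁ ∈ A, ∀ x₂ ∈ A, ∀ θ : EuclideanSpace ℝ (Fin n),
      (inner ℝ (gradient u x₁ - gradient u x₂) θ : ℝ) ≤
        C * ‖x₂ - x₁‖ ^ 2 + C * ‖x₂ - x₁‖ * ‖θ‖ + 2 * C * ‖θ‖ ^ 2 := by
  intro x₁ hx₁ x₂ hx₂ θ
  rw [hA] at hx₁ hx₂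
  have hx₁' : u x₁ = v x₁ := hx₁
  have hx₂' : u x₂ = v x₂ := hx₂
  rcases Nat.eq_zero_or_pos n with h0 | hn
  · subst h0
    have hθ : θ = 0 := Subsingleton.elim _ _
    have hx : x₂ = x₁ := Subsingleton.elim _ _
    subst hθ hx
    simp
  have hC : 0 ≤ C := C_nonneg hu hv huv x₀ hx₀ hn
  obtain ⟨p₁, hg₁, hA₁, hB₁⟩ := contact_lemma hu hv huv x₁ hx₁'
  obtain ⟨p₂, hg₂, hA₂, hB₂⟩ := contact_lemma hu hv huv x₂ hx₂'
  have h1 := hA₂ (x₁ + θ)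
  have h2 := hB₁ (x₁ + θ)
  have h3 := hB₂ x₁
  have h4 := huv (x₁ + θ)
  rw [add_sub_cancel_left] at h2
  have hsplit : (x₁ + θ) - x₂ = (x₁ - x₂) + θ := by abel
  rw [hsplit, inner_add_right] at h1
  have h5 : ‖(x₁ - x₂) + θ‖ ^ 2 ≤ (‖x₂ - x₁‖ + ‖θ‖) ^ 2 := by
    have hle : ‖(x₁ - x₂) + θ‖ ≤ ‖x₂ - x₁‖ + ‖θ‖ := by
      have := norm_add_le (x₁ - x₂) θ
      rwa [norm_sub_rev x₁ x₂] at this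
    exact pow_le_pow_left₀ (norm_nonneg _) hle 2
  have h6 : ‖x₁ - x₂‖ = ‖x₂ - x₁‖ := norm_sub_rev _ _
  rw [hg₁, hg₂, inner_sub_left]
  rw [h6] at h3
  have h7 := mul_le_mul_of_nonneg_left h5 (show (0:ℝ) ≤ C / 2 by linarith)
  nlinarith [h1, h2, h3, h4, h7, hx₁', hx₂', mul_nonneg hC (sq_nonneg ‖θ‖)]
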